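/- Let G be a double-magical triple-ordered graph with ω(G) = k, with partial orders ≺₁ (a ≺₁ b iff a <₁ b, a <₂ b, a <₃ b, ab ∈ E) etc. For h = 1,…,k let S_h be the set of vertices v whose longest ≺₁-chain with maximum element v has size k−h+1. Then each S_h is a ≺₁-antichain containing no clique of size h+1 in G. -/
import Mathlib

open Finset

private lemma exists_rel_min {V : Type*} (r : V → V → Prop) [IsStrictTotalOrder V r]
    (s : Finset V) (hs : s.Nonempty) : ∃ a ∈ s, ∀ w ∈ s, w ≠ a → r a w := by
  classical
  induction s using Finset.induction_on with
  | empty => exact absurd hs (by simp)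
  | @insert x t hx ih =>
    rcases t.eq_empty_or_nonempty with rfl | ht
    · exact ⟨x, by simp⟩
    · obtain ⟨a, ha, hmin⟩ := ih ht
      rcases trichotomous_of r x a with hxa | rfl | hax
      · refine ⟨x, mem_insert_self _ _, ?_⟩
        intro w hw hwx
        rcases mem_insert.mp hw with rfl | hwt
        · exact absurd rfl hwx
        · rcases eq_or_ne w a with rfl | hwa
          · exact hxa
          · exact trans_of r hxa (hmin w hwt hwa)
      · exact absurd ha hx
      · refine ⟨a, mem_insert_of_mem ha, ?_⟩
        intro w hw hwa
        rcases mem_insert.mp hw with rfl | hwt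
        · exact hax
        · exact hmin w hwt hwa

/-- In a double-magical triple-ordered graph `G` with `ω(G) = k`, with
`a ≺₁ b ↔ a <₁ b ∧ a <₂ b ∧ a <₃ b ∧ ab ∈ E(G)`, letting `S_h` be the set of vertices
`v` whose longest `≺₁`-chain with maximum element `v` has size `k−h+1`, each `S_h`
(for `1 ≤ h ≤ k`) is a `≺₁`-antichain containing no clique of size `h+1`. -/
theorem doubleMagical_levels {V : Type*} [Fintype V] (G G1 G2 : SimpleGraph V)
    (lt1 lt2 lt3 : V → V → Prop)
    [IsStrictTotalOrder V lt1] [IsStrictTotalOrder V lt2] [IsStrictTotalOrder V lt3]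
    (hmag1 : ∀ a b c : V, lt1 a b → lt1 b c → G1.Adj a b → G1.Adj b c → ¬ G1.Adj a c →
      lt2 b a ∧ lt2 b c)
    (hmag2 : ∀ a b c : V, lt1 a b → lt1 b c → G2.Adj a b → G2.Adj b c → ¬ G2.Adj a c →
      lt3 b a ∧ lt3 b c)
    (hE : ∀ u v : V, G.Adj u v ↔ G1.Adj u v ∧ G2.Adj u v)
    (k : ℕ)
    (hω : G.CliqueFree (k + 1) ∧ ¬ G.CliqueFree k)
    (prec1 : V → V → Prop)
    (hprec1 : ∀ a b : V, prec1 a b ↔ lt1 a b ∧ lt2 a b ∧ lt3 a b ∧ G.Adj a b)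
    (g : V → ℕ)
    (hg : ∀ v : V, g v = sSup {n : ℕ | ∃ s : Finset V, s.card = n ∧ v ∈ s ∧
      (∀ u ∈ s, u ≠ v → prec1 u v) ∧
      ∀ u ∈ s, ∀ w ∈ s, u ≠ w → prec1 u w ∨ prec1 w u}) :
    ∀ h : ℕ, 1 ≤ h → h ≤ k →
      (∀ a b : V, g a = k - h + 1 → g b = k - h + 1 → ¬ prec1 a b) ∧
      (∀ s : Finset V, (∀ v ∈ s, g v = k - h + 1) → G.IsClique ↑s → s.card ≤ h) := by
  classical
  have asym1 : ∀ {a b : V}, lt1 a b → lt1 b a → False := fun hab hba =>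
    (irrefl_of lt1 _) (trans_of lt1 hab hba)
  have asym2 : ∀ {a b : V}, lt2 a b → lt2 b a → False := fun hab hba =>
    (irrefl_of lt2 _) (trans_of lt2 hab hba)
  have asym3 : ∀ {a b : V}, lt3 a b → lt3 b a → False := fun hab hba =>
    (irrefl_of lt3 _) (trans_of lt3 hab hba)
  -- key lemma: a ≺₁ b, b <₁ c, bc ∈ E ⟹ ac ∈ E
  have key : ∀ a b c : V, prec1 a b → lt1 b c → G.Adj b c → G.Adj a c := by
    intro a b c hab hbc hadj
    rw [hprec1] at hab
    obtain ⟨h1, h2, h3, hGab⟩ := hab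
    by_contra hnac
    rw [hE] at hnac hGab hadj
    rcases not_and_or.mp hnac with hn | hn
    · exact asym2 h2 (hmag1 a b c h1 hbc hGab.1 hadj.1 hn).1
    · exact asym3 h3 (hmag2 a b c h1 hbc hGab.2 hadj.2 hn).1
  have ptrans : ∀ {a b c : V}, prec1 a b → prec1 b c → prec1 a c := by
    intro a b c hab hbc
    obtain ⟨h1, h2, h3, hGbc⟩ := (hprec1 b c).mp hbc
    have hac := key a b c hab h1 hGbc
    obtain ⟨g1, g2, g3, _⟩ := (hprec1 a b).mp hab
    exact (hprec1 a c).mpr ⟨trans_of lt1 g1 h1, trans_of lt2 g2 h2, trans_of lt3 g3 h3, hac⟩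
  have pasym : ∀ {a b : V}, prec1 a b → prec1 b a → False := by
    intro a b hab hba
    exact asym1 ((hprec1 a b).mp hab).1 ((hprec1 b a).mp hba).1
  have pirr : ∀ a : V, ¬ prec1 a a := fun a h => (irrefl_of lt1 a) ((hprec1 a a).mp h).1
  -- the chain sets
  set C : V → Set ℕ := fun v => {n : ℕ | ∃ s : Finset V, s.card = n ∧ v ∈ s ∧
      (∀ u ∈ s, u ≠ v → prec1 u v) ∧
      ∀ u ∈ s, ∀ w ∈ s, u ≠ w → prec1 u w ∨ prec1 w u} with hC
  have hne : ∀ v : V, (C v).Nonempty := by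
    intro v
    refine ⟨1, {v}, by simp, by simp, ?_, ?_⟩
    · intro u hu hne; simp at hu; exact absurd hu hne
    · intro u hu w hw hne; simp at hu hw; subst hu; subst hw; exact absurd rfl hne
  have hbdd : ∀ v : V, BddAbove (C v) := by
    intro v
    refine ⟨Fintype.card V, ?_⟩
    rintro n ⟨s, hcard, -⟩
    exact hcard ▸ s.card_le_univ.trans_eq Finset.card_univ
  have hmem : ∀ v : V, g v ∈ C v := fun v => (hg v) ▸ Nat.sSup_mem (hne v) (hbdd v)
  have hle : ∀ v : V, ∀ n ∈ C v, n ≤ g v := fun v n hn => (hg v) ▸ le_csSup (hbdd v) hn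
  intro h hh1 hhk
  constructor
  · -- antichain
    intro a b hga hgb hab
    obtain ⟨s, hcard, has, hto, hpair⟩ := hmem a
    have hbs : b ∉ s := by
      intro hbs
      rcases eq_or_ne b a with rfl | hba
      · exact pirr b hab
      · exact pasym hab (hto b hbs hba)
    have hmem' : s.card + 1 ∈ C b := by
      refine ⟨insert b s, Finset.card_insert_of_notMem hbs, Finset.mem_insert_self _ _, ?_, ?_⟩
      · intro u hu hub
        rcases Finset.mem_insert.mp hu with rfl | hus
        · exact absurd rfl hub
        · rcases eq_or_ne u a with rfl | hua
          · exact hab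
          · exact ptrans (hto u hus hua) hab
      · intro u hu w hw huw
        rcases Finset.mem_insert.mp hu with rfl | hus
        · rcases Finset.mem_insert.mp hw with rfl | hws
          · exact absurd rfl huw
          · rcases eq_or_ne w a with rfl | hwa
            · exact Or.inr hab
            · exact Or.inr (ptrans (hto w hws hwa) hab)
        · rcases Finset.mem_insert.mp hw with rfl | hws
          · rcases eq_or_ne u a with rfl | hua
            · exact Or.inl hab
            · exact Or.inl (ptrans (hto u hus hua) hab)
          · exact hpair u hus w hws huw
    have := hle b _ hmem'
    omega
  · -- no clique of size h+1
    intro s hgs hclq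
    by_contra hlt
    push_neg at hlt
    obtain ⟨s', hsub, hcard'⟩ := Finset.exists_subset_card_eq (show h + 1 ≤ s.card from hlt)
    have hs'ne : s'.Nonempty := Finset.card_pos.mp (by omega)
    obtain ⟨a, has', hamin⟩ := exists_rel_min lt1 s' hs'ne
    obtain ⟨s₀, hcard₀, has₀, hto₀, hpair₀⟩ := hmem a
    have hga : g a = k - h + 1 := hgs a (hsub has')
    -- elements of s₀ \ {a} are disjoint from s'
    have hdisj : Disjoint (s₀.erase a) s' := by
      rw [Finset.disjoint_left]
      intro c hc hcs'
      have hca : c ≠ a := Finset.ne_of_mem_erase hc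
      have hp : prec1 c a := hto₀ c (Finset.mem_of_mem_erase hc) hca
      exact asym1 ((hprec1 c a).mp hp).1 (hamin c hcs' hca)
    -- the big clique
    have hbig : G.IsNClique (k + 1) ((s₀.erase a) ∪ s') := by
      constructor
      · intro u hu w hw huw
        simp only [Finset.coe_union, Set.mem_union, Finset.coe_erase, Set.mem_diff,
          Finset.mem_coe, Set.mem_singleton_iff] at hu hw
        have adj_of_chain_clique : ∀ x y : V, x ∈ s₀ → x ≠ a → y ∈ s' → x ≠ y → G.Adj x y := by
          intro x y hx hxa hy hxy
          have hp : prec1 x a := hto₀ x hx hxa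
          rcases eq_or_ne y a with rfl | hya
          · exact ((hprec1 x y).mp hp).2.2.2
          · exact key x a y hp (hamin y hy hya)
              (hclq (hsub has') (hsub hy) (Ne.symm hya))
        rcases hu with ⟨hu₀, hua⟩ | hus'
        · rcases hw with ⟨hw₀, hwa⟩ | hws'
          · rcases hpair₀ u hu₀ w hw₀ huw with hp | hp
            · exact ((hprec1 u w).mp hp).2.2.2
            · exact (((hprec1 w u).mp hp).2.2.2).symm
          · exact adj_of_chain_clique u w hu₀ hua hws' huw
        · rcases hw with ⟨hw₀, hwa⟩ | hws'
          · exact (adj_of_chain_clique w u hw₀ hwa hus' (Ne.symm huw)).symm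
          · exact hclq (hsub hus') (hsub hws') huw
      · rw [Finset.card_union_of_disjoint hdisj, Finset.card_erase_of_mem has₀]
        omega
    exact hω.1 _ hbig
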